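/- One has lim_{t→∞} 1/(b(t)² (B(t)+1)) = 0, where B(t) := ∫₀^t b(σ)^{−1} dσ. -/

import Mathlib

open MeasureTheory Filter

/-- If `b ∈ C¹([0,∞))` is positive on `[0,∞)`, `∫₀^∞ b(σ)⁻¹ dσ = ∞`, and
`|b'(t)|/b(t)² ≤ C (1+t)^{−γ}` for all `t > 0` (with `γ > 0`, `C > 0`), then
`lim_{t→∞} 1/(b(t)² (B(t)+1)) = 0`, where `B(t) = ∫₀^t b(σ)⁻¹ dσ`. -/
theorem stmt_2 (b : ℝ → ℝ) (hb : ContDiff ℝ 1 b)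
    (hbpos : ∀ t ≥ (0 : ℝ), 0 < b t)
    (hnotover : Filter.Tendsto (fun t => ∫ σ in (0:ℝ)..t, (b σ)⁻¹)
      Filter.atTop Filter.atTop)
    (γ C : ℝ) (hγ : 0 < γ) (hC : 0 < C)
    (hb' : ∀ t > (0 : ℝ), |deriv b t| / (b t) ^ 2 ≤ C * (1 + t) ^ (-γ)) :
    Filter.Tendsto (fun t => 1 / ((b t) ^ 2 * ((∫ σ in (0:ℝ)..t, (b σ)⁻¹) + 1)))
      Filter.atTop (nhds 0) := by
  set u : ℝ → ℝ := fun s => (b s)⁻¹ with hu_def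
  set B : ℝ → ℝ := fun t => ∫ σ in (0:ℝ)..t, (b σ)⁻¹ with hB_def
  have hbc : Continuous b := hb.continuous
  have hb'c : Continuous (deriv b) := hb.continuous_deriv le_rfl
  have hucont : ContinuousOn u (Set.Ici 0) :=
    hbc.continuousOn.inv₀ (fun x hx => (hbpos x hx).ne')
  have hint : ∀ a c : ℝ, 0 ≤ a → a ≤ c → IntervalIntegrable u volume a c := by
    intro a c ha hac
    exact (hucont.mono (Set.Icc_subset_Ici_iff hac |>.mpr ha)).intervalIntegrable_of_Icc hac
  have hBnonneg : ∀ t ≥ (0:ℝ), 0 ≤ B t := by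
    intro t ht
    apply intervalIntegral.integral_nonneg ht
    intro s hs
    exact inv_nonneg.2 (hbpos s hs.1).le
  -- main estimate
  rw [Metric.tendsto_nhds]
  intro ε hε
  -- choose T
  have htend : Tendsto (fun s : ℝ => C * (1 + s) ^ (-γ)) atTop (nhds (C * 0)) := by
    exact ((tendsto_rpow_neg_atTop hγ).comp
      (tendsto_atTop_add_const_left atTop 1 tendsto_id)).const_mul C
  rw [mul_zero] at htend
  have hev : ∀ᶠ s in atTop, C * (1 + s) ^ (-γ) ≤ ε / 4 :=
    htend.eventually_le_const (by positivity)
  obtain ⟨T₀, hT₀⟩ := eventually_atTop.1 hev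
  set T : ℝ := max T₀ 1 with hT_def
  have hT1 : (1:ℝ) ≤ T := le_max_right _ _
  have hTpos : (0:ℝ) < T := lt_of_lt_of_le one_pos hT1
  -- key inequality
  have key : ∀ t ≥ T, (u t) ^ 2 ≤ (u T) ^ 2 + (ε / 2) * (B t - B T) := by
    intro t ht
    have hne : ∀ s ∈ Set.uIcc T t, b s ≠ 0 := by
      intro s hs
      rw [Set.uIcc_of_le ht] at hs
      exact (hbpos s (hTpos.le.trans hs.1)).ne'
    have hd : ∀ s ∈ Set.uIcc T t,
        HasDerivAt (fun s => u s ^ 2) (2 * u s * (-(deriv b s) / (b s) ^ 2)) s := by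
      intro s hs
      have h1 : HasDerivAt b (deriv b s) s :=
        ((hb.differentiable one_ne_zero) s).hasDerivAt
      have h2 : HasDerivAt u (-(deriv b s) / (b s) ^ 2) s := h1.inv (hne s hs)
      have h3 : HasDerivAt (fun s => u s ^ 2)
          (((2:ℕ):ℝ) * u s ^ (2 - 1) * (-(deriv b s) / (b s) ^ 2)) s := h2.pow 2
      convert h3 using 1
      push_cast
      ring
    have hcont' : ContinuousOn (fun s => 2 * u s * (-(deriv b s) / (b s) ^ 2))
        (Set.uIcc T t) := by
      apply ContinuousOn.mul
      · exact continuousOn_const.mul (hbc.continuousOn.inv₀ hne)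
      · exact (hb'c.continuousOn.neg).div ((hbc.pow 2).continuousOn)
          (fun s hs => pow_ne_zero 2 (hne s hs))
    have hint' : IntervalIntegrable (fun s => 2 * u s * (-(deriv b s) / (b s) ^ 2))
        volume T t := hcont'.intervalIntegrable
    have hftc : ∫ s in T..t, 2 * u s * (-(deriv b s) / (b s) ^ 2)
        = u t ^ 2 - u T ^ 2 :=
      intervalIntegral.integral_eq_sub_of_hasDerivAt hd hint'
    have hint2 : IntervalIntegrable (fun s => (ε / 2) * u s) volume T t :=
      (hint T t hTpos.le ht).const_mul _
    have hmono : ∫ s in T..t, 2 * u s * (-(deriv b s) / (b s) ^ 2)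
        ≤ ∫ s in T..t, (ε / 2) * u s := by
      apply intervalIntegral.integral_mono_on ht hint' hint2
      intro s hs
      have hspos : 0 < s := lt_of_lt_of_le hTpos hs.1
      have hsT₀ : T₀ ≤ s := le_trans (le_max_left _ _) hs.1
      have hu0 : 0 ≤ u s := inv_nonneg.2 (hbpos s hspos.le).le
      have h3 : -(deriv b s) / (b s) ^ 2 ≤ ε / 4 := by
        calc -(deriv b s) / (b s) ^ 2 ≤ |deriv b s| / (b s) ^ 2 := by
              apply div_le_div_of_nonneg_right (neg_le_abs _) ?_
              exact (pow_pos (hbpos s hspos.le) 2).le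
          _ ≤ C * (1 + s) ^ (-γ) := hb' s hspos
          _ ≤ ε / 4 := hT₀ s hsT₀
      nlinarith [mul_le_mul_of_nonneg_left h3 hu0]
    have hconst : ∫ s in T..t, (ε / 2) * u s = (ε / 2) * (B t - B T) := by
      rw [intervalIntegral.integral_const_mul]
      have hsub := intervalIntegral.integral_interval_sub_left
        (hint 0 t le_rfl (hTpos.le.trans ht))
        (hint 0 T le_rfl hTpos.le)
      simp only [hB_def, hu_def] at hsub ⊢
      rw [hsub]
    linarith
  -- finish
  have hevB : ∀ᶠ t in atTop, B t ≥ (u T) ^ 2 * 4 / ε := hnotover.eventually_ge_atTop _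
  filter_upwards [hevB, eventually_ge_atTop T] with t h1 h2
  have htpos : (0:ℝ) ≤ t := hTpos.le.trans h2
  have hbt : 0 < b t := hbpos t htpos
  have hBt : 0 ≤ B t := hBnonneg t htpos
  have hBT : 0 ≤ B T := hBnonneg T hTpos.le
  have hden : 0 < (b t) ^ 2 * (B t + 1) := by positivity
  rw [Real.dist_eq, sub_zero]
  have hfeq : 1 / ((b t) ^ 2 * (B t + 1)) = (u t) ^ 2 / (B t + 1) := by
    rw [hu_def]
    field_simp
  have hkey := key t h2
  have huT : (u T) ^ 2 ≤ ε / 4 * B t := by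
    rw [ge_iff_le, div_le_iff₀ hε, ← sub_nonneg] at h1
    nlinarith
  rw [abs_of_pos (by positivity), hfeq, div_lt_iff₀ (by linarith)]
  nlinarith
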